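/- Let p be an odd prime and D a positive integer with p ∤ D, and let a be an integer such that for every i ∈ {0, 1, …, p-1} the absolute value |a + 2iD| is a prime number. Then there exists an index i ∈ {0, 1, …, p-1} with a + 2iD = p or a + 2iD = -p. In particular, for any prime p > 3 and any distance 2D with 3 | D and p ∤ D, there is at most one (2p-1)-tuple p - 2(p-1)D, …, p - 2D, p, p + 2D, …, p + 2(p-1)D consisting entirely of primes of the extended classification. -/

import Mathlib

/-- If `p` is an odd prime, `D ≥ 1` with `p ∤ D`, and all `p` integers
`a + 2iD` (`i = 0,…,p-1`) have prime absolute value, then one of them equals `p`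
or `-p`. -/
theorem p_tuple_contains_pm_p (p : ℕ) (hp : p.Prime) (hodd : Odd p)
    (D : ℕ) (hD : 0 < D) (hpD : ¬ (p ∣ D)) (a : ℤ)
    (h : ∀ i : ℕ, i < p → Nat.Prime (a + 2 * i * D).natAbs) :
    ∃ i : ℕ, i < p ∧ (a + 2 * i * D = p ∨ a + 2 * i * D = -(p : ℤ)) := by
  haveI : Fact p.Prime := ⟨hp⟩
  have hp2 : ¬ (p ∣ 2) := by
    intro hd
    have := (Nat.prime_dvd_prime_iff_eq hp Nat.prime_two).mp hd
    subst this
    exact (Nat.not_even_iff_odd.mpr hodd) (even_two)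
  have hu : (2 * (D : ZMod p)) ≠ 0 := by
    have h2 : (2 : ZMod p) ≠ 0 := by
      have : ((2:ℕ):ZMod p) ≠ 0 := by
        rw [Ne, ZMod.natCast_eq_zero_iff]; exact hp2
      simpa using this
    have hDz : (D : ZMod p) ≠ 0 := by
      simpa [(ZMod.natCast_eq_zero_iff D p)] using hpD
    exact mul_ne_zero h2 hDz
  set x : ZMod p := (-a : ℤ) * (2 * (D : ZMod p))⁻¹ with hx
  refine ⟨x.val, x.val_lt, ?_⟩
  have hix : ((x.val : ℕ) : ZMod p) = x := ZMod.natCast_val x |>.trans (ZMod.cast_id _ _)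
  have hzero : ((a + 2 * x.val * D : ℤ) : ZMod p) = 0 := by
    push_cast
    rw [hix, hx]
    linear_combination ((-a : ℤ) : ZMod p) * mul_inv_cancel₀ hu + Int.cast_neg (R := ZMod p) a
  have hdvd : (p : ℤ) ∣ (a + 2 * x.val * D) := by
    exact (ZMod.intCast_zmod_eq_zero_iff_dvd _ p).mp hzero
  have hdvd' : p ∣ (a + 2 * x.val * D).natAbs := by
    have := Int.natAbs_dvd_natAbs.mpr hdvd
    rwa [Int.natAbs_natCast] at this
  have heq : (a + 2 * x.val * D).natAbs = p :=
    ((Nat.prime_dvd_prime_iff_eq hp (h x.val x.val_lt)).mp hdvd').symm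
  have := Int.natAbs_eq_iff.mp heq
  simpa using this
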